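/- Let G_w be a weighted bicyclic graph. Then the rank of A(G_w) equals 3 if and only if G_w is isomorphic as a weighted graph to weighted θ(1,0,1) — vertices u, v, x_1, x_2 with edges uv, ux_1, x_1v, ux_2, x_2v — whose weights satisfy w(ux_1)·w(x_2v) = w(ux_2)·w(x_1v). -/

import Mathlib

open Matrix

/-- The positive inertia index of a matrix: the number of positive eigenvalues
(counted with multiplicity) if the matrix is Hermitian, and `0` otherwise. -/
noncomputable def posInertia {k 𝕜 : Type*} [RCLike 𝕜] [Fintype k] [DecidableEq k]
    (A : Matrix k k 𝕜) : ℕ :=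
  if h : A.IsHermitian then Fintype.card {i // 0 < h.eigenvalues i} else 0

/-- The negative inertia index of a matrix. -/
noncomputable def negInertia {k 𝕜 : Type*} [RCLike 𝕜] [Fintype k] [DecidableEq k]
    (A : Matrix k k 𝕜) : ℕ :=
  if h : A.IsHermitian then Fintype.card {i // h.eigenvalues i < 0} else 0

/-- The nullity of a matrix: the number of zero eigenvalues. -/
noncomputable def nulInertia {k 𝕜 : Type*} [RCLike 𝕜] [Fintype k] [DecidableEq k]
    (A : Matrix k k 𝕜) : ℕ :=
  if h : A.IsHermitian then Fintype.card {i // h.eigenvalues i = 0} else 0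

/-- A weighted graph: a simple graph together with a symmetric weight function
which is positive on all edges. -/
structure WeightedGraph (V : Type*) where
  G : SimpleGraph V
  w : V → V → ℝ
  symm : ∀ u v : V, w u v = w v u
  pos : ∀ u v : V, G.Adj u v → 0 < w u v

open Classical in
/-- The (weighted) adjacency matrix of a weighted graph. -/
noncomputable def WeightedGraph.adjMatrix {V : Type*} [Fintype V] [DecidableEq V]
    (W : WeightedGraph V) : Matrix V V ℝ :=
  fun a b => if W.G.Adj a b then W.w a b else 0

/-- `i₊`, the number of positive eigenvalues of the adjacency matrix. -/
noncomputable def WeightedGraph.iPos {V : Type*} [Fintype V] [DecidableEq V]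
    (W : WeightedGraph V) : ℕ := posInertia W.adjMatrix

/-- `i₋`, the number of negative eigenvalues of the adjacency matrix. -/
noncomputable def WeightedGraph.iNeg {V : Type*} [Fintype V] [DecidableEq V]
    (W : WeightedGraph V) : ℕ := negInertia W.adjMatrix

/-- `i₀`, the number of zero eigenvalues of the adjacency matrix. -/
noncomputable def WeightedGraph.iNul {V : Type*} [Fintype V] [DecidableEq V]
    (W : WeightedGraph V) : ℕ := nulInertia W.adjMatrix

/-- A weighted graph is bicyclic if its underlying graph is connected and has
exactly one more edge than vertices. -/
def WeightedGraph.IsBicyclic {V : Type*} [Fintype V] (W : WeightedGraph V) : Prop :=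
  W.G.Connected ∧ W.G.edgeSet.ncard = Fintype.card V + 1

/-- The graph has a pendant vertex (a vertex of degree one). -/
def WeightedGraph.HasPendant {V : Type*} (W : WeightedGraph V) : Prop :=
  ∃ x : V, (W.G.neighborSet x).ncard = 1

/-- The graph has no pendant vertices. -/
def WeightedGraph.NoPendant {V : Type*} (W : WeightedGraph V) : Prop :=
  ∀ x : V, (W.G.neighborSet x).ncard ≠ 1

/-- The base of `G` is (isomorphic to) `H`: some induced subgraph of `G` is
isomorphic to `H`.  (For a bicyclic graph `G` and a bicyclic graph `H` without
pendant vertices this induced subgraph is necessarily the unique base of `G`.) -/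
def BaseIsoTo {V B : Type*} (G : SimpleGraph V) (H : SimpleGraph B) : Prop :=
  ∃ S : Set V, Nonempty ((G.induce S) ≃g H)

/-- Vertex labels of the connecting path of `∞(p,l,q)`: the path starts at the
vertex `0` of the first cycle `0, 1, …, p-1`, and its further vertices are
`p, p+1, …`. -/
def pathVert (p j : ℕ) : ℕ := if j = 0 then 0 else p - 1 + j

/-- Vertex labels of the second cycle of `∞(p,l,q)`: it starts at the last
vertex of the connecting path and continues with `p+l-1, p+l, …`. -/
def infCyc2Vert (p l k : ℕ) : ℕ := if k = 0 then pathVert p (l - 1) else p + l - 2 + k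

/-- The edge relation of `∞(p,l,q)` on the vertex labels `0, …, p+q+l-3`:
the first cycle on `0, …, p-1`, the connecting path (on `l` vertices) from the
vertex `0`, and the second cycle attached at the last path vertex. -/
def infinityRel (p l q a b : ℕ) : Prop :=
  (a + 1 < p ∧ b = a + 1) ∨ (a = 0 ∧ b = p - 1) ∨
  (∃ j, j + 1 < l ∧ a = pathVert p j ∧ b = pathVert p (j + 1)) ∨
  (∃ k, k + 1 < q ∧ a = infCyc2Vert p l k ∧ b = infCyc2Vert p l (k + 1)) ∨
  (a = infCyc2Vert p l 0 ∧ b = infCyc2Vert p l (q - 1))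

/-- The graph `∞(p,l,q)`: two vertex-disjoint cycles of lengths `p` and `q`
joined by a path on `l` vertices (whose endpoints are identified with one
vertex on each cycle).  It has `p + q + l - 2` vertices. -/
def infinityGraph (p l q : ℕ) : SimpleGraph (Fin (p + q + l - 2)) :=
  SimpleGraph.fromRel (fun a b => infinityRel p l q a.1 b.1)

/-- The edge relation of one of the three `u,v`-paths of `θ(p,l,q)` having `m`
internal vertices, the internal vertices being labelled `o, o+1, …, o+m-1`
(`u` is the vertex `0` and `v` is the vertex `1`). -/
def thetaPathRel (m o a b : ℕ) : Prop :=
  if m = 0 then a = 0 ∧ b = 1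
  else (a = 0 ∧ b = o) ∨ (∃ i, i + 1 < m ∧ a = o + i ∧ b = o + i + 1) ∨ (a = o + m - 1 ∧ b = 1)

/-- The graph `θ(p,l,q)`: two vertices `u = 0` and `v = 1` joined by three
internally disjoint paths with `p`, `l`, `q` internal vertices respectively.
It has `p + l + q + 2` vertices. -/
def thetaGraph (p l q : ℕ) : SimpleGraph (Fin (p + l + q + 2)) :=
  SimpleGraph.fromRel (fun a b =>
    thetaPathRel p 2 a.1 b.1 ∨ thetaPathRel l (p + 2) a.1 b.1 ∨
      thetaPathRel q (p + l + 2) a.1 b.1)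

/-- The edge set of `G` is exactly the (symmetrized) list `E`. -/
def adjSpec {V : Type*} (G : SimpleGraph V) (E : List (V × V)) : Prop :=
  ∀ a b : V, G.Adj a b ↔ ((a, b) ∈ E ∨ (b, a) ∈ E)

/-- The weighted subgraph induced on a set `S` of vertices. -/
def WeightedGraph.induce {V : Type*} (W : WeightedGraph V) (S : Set V) : WeightedGraph S where
  G := W.G.induce S
  w := fun a b => W.w a b
  symm := fun a b => W.symm a b
  pos := fun a b h => W.pos a b h

/-- The `k`-th vertex (mod `n`) of a cycle on `Fin n`. -/
def cycVert (n : ℕ) (hn : 0 < n) (k : ℕ) : Fin n := ⟨k % n, Nat.mod_lt _ hn⟩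

/-- `W` is the weighted graph `θ(1,1,1)` (i.e. `K_{2,3}`) with parts `{u, v}`
and `{x1, x2, x3}`. -/
def Theta111Shape {V : Type*} (W : WeightedGraph V) (u v x1 x2 x3 : V) : Prop :=
  [u, v, x1, x2, x3].Nodup ∧ (∀ z : V, z ∈ [u, v, x1, x2, x3]) ∧
    adjSpec W.G [(u, x1), (u, x2), (u, x3), (x1, v), (x2, v), (x3, v)]

/-- `W` is the weighted graph `θ(1,0,1)` on vertices `u, v, x1, x2` with edges
`uv, ux1, x1v, ux2, x2v`. -/
def Theta101Shape {V : Type*} (W : WeightedGraph V) (u v x1 x2 : V) : Prop :=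
  [u, v, x1, x2].Nodup ∧ (∀ z : V, z ∈ [u, v, x1, x2]) ∧
    adjSpec W.G [(u, v), (u, x1), (x1, v), (u, x2), (x2, v)]

/-- `W` is the weighted graph `θ(1,0,2)` on vertices `u, v, x, y, z` with edges
`uv, ux, xv, uy, yz, zv`. -/
def Theta102Shape {V : Type*} (W : WeightedGraph V) (u v x y z : V) : Prop :=
  [u, v, x, y, z].Nodup ∧ (∀ t : V, t ∈ [u, v, x, y, z]) ∧
    adjSpec W.G [(u, v), (u, x), (x, v), (u, y), (y, z), (z, v)]

/-- `W` is the weighted graph `θ(2,0,2)` on vertices `u, v, x1, x2, y1, y2`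
with edges `uv, ux1, x1x2, x2v, uy1, y1y2, y2v`. -/
def Theta202Shape {V : Type*} (W : WeightedGraph V) (u v x1 x2 y1 y2 : V) : Prop :=
  [u, v, x1, x2, y1, y2].Nodup ∧ (∀ t : V, t ∈ [u, v, x1, x2, y1, y2]) ∧
    adjSpec W.G [(u, v), (u, x1), (x1, x2), (x2, v), (u, y1), (y1, y2), (y2, v)]

/-- `W` is the weighted graph `θ(1,1,2)` on vertices `u, v, x1, x2, y1, y2`
with edges `ux1, x1v, ux2, x2v, uy1, y1y2, y2v`. -/
def Theta112Shape {V : Type*} (W : WeightedGraph V) (u v x1 x2 y1 y2 : V) : Prop :=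
  [u, v, x1, x2, y1, y2].Nodup ∧ (∀ t : V, t ∈ [u, v, x1, x2, y1, y2]) ∧
    adjSpec W.G [(u, x1), (x1, v), (u, x2), (x2, v), (u, y1), (y1, y2), (y2, v)]

/-- `W` is the weighted graph `∞(3,1,3)`: two triangles sharing the vertex `c`. -/
def Inf313Shape {V : Type*} (W : WeightedGraph V) (c a1 a2 b1 b2 : V) : Prop :=
  [c, a1, a2, b1, b2].Nodup ∧ (∀ t : V, t ∈ [c, a1, a2, b1, b2]) ∧
    adjSpec W.G [(c, a1), (a1, a2), (a2, c), (c, b1), (b1, b2), (b2, c)]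

/-- `W` is the weighted graph `∞(3,2,3)`: the triangle `u,x,y` and the triangle
`v,s,t`, joined by the edge `uv`. -/
def Inf323Shape {V : Type*} (W : WeightedGraph V) (u v x y s t : V) : Prop :=
  [u, v, x, y, s, t].Nodup ∧ (∀ z : V, z ∈ [u, v, x, y, s, t]) ∧
    adjSpec W.G [(u, x), (x, y), (y, u), (v, s), (s, t), (t, v), (u, v)]

/-- `W` is the weighted graph `∞(3,1,4)`: the triangle `c,x,y` and the
quadrilateral `c,z1,z2,z3` sharing the vertex `c`. -/
def Inf314Shape {V : Type*} (W : WeightedGraph V) (c x y z1 z2 z3 : V) : Prop :=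
  [c, x, y, z1, z2, z3].Nodup ∧ (∀ t : V, t ∈ [c, x, y, z1, z2, z3]) ∧
    adjSpec W.G [(c, x), (x, y), (y, c), (c, z1), (z1, z2), (z2, z3), (z3, c)]

/-- `W` is the weighted graph `∞(4,1,4)`: the quadrilaterals `c,x1,x2,x3` and
`c,y1,y2,y3` sharing the vertex `c`. -/
def Inf414Shape {V : Type*} (W : WeightedGraph V) (c x1 x2 x3 y1 y2 y3 : V) : Prop :=
  [c, x1, x2, x3, y1, y2, y3].Nodup ∧ (∀ t : V, t ∈ [c, x1, x2, x3, y1, y2, y3]) ∧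
    adjSpec W.G [(c, x1), (x1, x2), (x2, x3), (x3, c), (c, y1), (y1, y2), (y2, y3), (y3, c)]

/-! ### Auxiliary lemmas for `stmt12` -/

section Stmt12Aux

set_option linter.unusedSectionVars false
set_option maxHeartbeats 1000000

section MatrixUtil

variable {V : Type*} [Fintype V] [DecidableEq V]

private lemma myrank_submatrix_le {k : ℕ} (A : Matrix V V ℝ) (f : Fin k → V) :
    (A.submatrix f f).rank ≤ A.rank := by
  have h1 : (Matrix.of fun (i : Fin k) (v : V) => if f i = v then (1 : ℝ) else 0) * A
      = A.submatrix f id := by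
    ext i j
    simp [Matrix.mul_apply, boole_mul]
  have h2 : A.submatrix f id *
      (Matrix.of fun (v : V) (j : Fin k) => if v = f j then (1 : ℝ) else 0)
      = A.submatrix f f := by
    ext i j
    simp [Matrix.mul_apply, mul_boole]
  calc (A.submatrix f f).rank
      = ((Matrix.of fun (i : Fin k) (v : V) => if f i = v then (1 : ℝ) else 0) * A
        * (Matrix.of fun (v : V) (j : Fin k) => if v = f j then (1 : ℝ) else 0)).rank := by
        rw [h1, h2]
    _ ≤ ((Matrix.of fun (i : Fin k) (v : V) => if f i = v then (1 : ℝ) else 0) * A).rank :=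
        Matrix.rank_mul_le_left _ _
    _ ≤ A.rank := Matrix.rank_mul_le_right _ _

private lemma le_rank_of_det_ne {k : ℕ} (A : Matrix V V ℝ) (f : Fin k → V)
    (h : (A.submatrix f f).det ≠ 0) : k ≤ A.rank := by
  have h1 : (A.submatrix f f).rank = k := by
    rw [Matrix.rank_of_isUnit _ ((Matrix.isUnit_iff_isUnit_det _).mpr (isUnit_iff_ne_zero.mpr h)),
      Fintype.card_fin]
  exact h1 ▸ myrank_submatrix_le A f

private lemma rank_lt_card_of_det_eq_zero (A : Matrix V V ℝ) (h : A.det = 0) :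
    A.rank < Fintype.card V := by
  obtain ⟨x, hx, hAx⟩ := (Matrix.exists_mulVec_eq_zero_iff).mpr h
  have hker : 0 < Module.finrank ℝ (LinearMap.ker A.mulVecLin) := by
    rw [Module.finrank_pos_iff_exists_ne_zero]
    exact ⟨⟨x, by simpa using hAx⟩, by simpa using hx⟩
  have h2 := LinearMap.finrank_range_add_finrank_ker A.mulVecLin
  have hcard : Module.finrank ℝ (V → ℝ) = Fintype.card V := by simp
  rw [hcard] at h2
  unfold Matrix.rank
  omega

private lemma myrank_add_le (A B : Matrix V V ℝ) : (A + B).rank ≤ A.rank + B.rank := by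
  have h : LinearMap.range (A + B).mulVecLin ≤
      LinearMap.range A.mulVecLin ⊔ LinearMap.range B.mulVecLin := by
    rintro x ⟨y, rfl⟩
    rw [Matrix.mulVecLin_add]
    exact Submodule.add_mem_sup ⟨y, rfl⟩ ⟨y, rfl⟩
  calc (A + B).rank
      ≤ Module.finrank ℝ ↥(LinearMap.range A.mulVecLin ⊔ LinearMap.range B.mulVecLin) :=
        Submodule.finrank_mono h
    _ ≤ A.rank + B.rank := by
        have := Submodule.finrank_sup_add_finrank_inf_eq (LinearMap.range A.mulVecLin)
          (LinearMap.range B.mulVecLin)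
        unfold Matrix.rank
        omega

private lemma myrank_vecMulVec_le (x y : V → ℝ) : (Matrix.vecMulVec x y).rank ≤ 1 := by
  rw [Matrix.vecMulVec_eq (Fin 1)]
  exact (Matrix.rank_mul_le_left _ _).trans
    ((Matrix.rank_le_card_width _).trans_eq (Fintype.card_fin 1))

private lemma detP4 (p q r : ℝ) :
    (!![0,p,0,0; p,0,q,0; 0,q,0,r; 0,0,r,0] : Matrix (Fin 4) (Fin 4) ℝ).det = p^2*r^2 := by
  simp [Matrix.det_succ_row_zero, Fin.sum_univ_succ, Fin.succAbove]
  ring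

private lemma detPaw (p q r s : ℝ) :
    (!![0,p,q,0; p,0,r,0; q,r,0,s; 0,0,s,0] : Matrix (Fin 4) (Fin 4) ℝ).det = p^2*s^2 := by
  simp [Matrix.det_succ_row_zero, Fin.sum_univ_succ, Fin.succAbove]
  ring

private lemma detC4 (s t u v : ℝ) :
    (!![0,0,s,t; 0,0,u,v; s,u,0,0; t,v,0,0] : Matrix (Fin 4) (Fin 4) ℝ).det = (s*v-t*u)^2 := by
  simp [Matrix.det_succ_row_zero, Fin.sum_univ_succ, Fin.succAbove]
  ring

private lemma detDiamond (a b c d e : ℝ) :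
    (!![0,a,b,d; a,0,c,e; b,c,0,0; d,e,0,0] : Matrix (Fin 4) (Fin 4) ℝ).det = (b*e-c*d)^2 := by
  simp [Matrix.det_succ_row_zero, Fin.sum_univ_succ, Fin.succAbove]
  ring

private lemma detTriangle (a b c : ℝ) :
    (!![0,a,b; a,0,c; b,c,0] : Matrix (Fin 3) (Fin 3) ℝ).det = 2*(a*b*c) := by
  simp [Matrix.det_fin_three]; ring

end MatrixUtil

section GraphUtil

variable {V : Type*}

private lemma walk_crossing {G : SimpleGraph V} {P : V → Prop} :
    ∀ {u v : V}, G.Walk u v → P u → ¬ P v → ∃ s t, G.Adj s t ∧ P s ∧ ¬ P t := by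
  intro u v p
  induction p with
  | nil => intro hu hv; exact absurd hu hv
  | @cons u w v h q ih =>
    intro hu hv
    by_cases hw : P w
    · exact ih hw hv
    · exact ⟨u, w, h, hu, hw⟩

private lemma reach_all {G : SimpleGraph V} (hconn : G.Connected) {P : V → Prop}
    (hcl : ∀ s t, P s → G.Adj s t → P t) {u : V} (hu : P u) : ∀ v, P v := by
  have key : ∀ {x y : V}, G.Walk x y → P x → P y := by
    intro x y p
    induction p with
    | nil => exact id
    | @cons x w y h q ih => intro hx; exact ih (hcl x w hx h)
  intro v
  obtain ⟨p⟩ := hconn.preconnected u v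
  exact key p hu

private lemma inj4 [DecidableEq V] {a b c d : V} (h1 : a ≠ b) (h2 : a ≠ c) (h3 : a ≠ d)
    (h4 : b ≠ c) (h5 : b ≠ d) (h6 : c ≠ d) : Function.Injective ![a,b,c,d] := by
  intro i j hij
  fin_cases i <;> fin_cases j <;> simp_all

private lemma inj3 [DecidableEq V] {a b c : V} (h1 : a ≠ b) (h2 : a ≠ c) (h4 : b ≠ c) :
    Function.Injective ![a,b,c] := by
  intro i j hij
  fin_cases i <;> fin_cases j <;> simp_all

end GraphUtil

section WGUtil

variable {V : Type*} [Fintype V] [DecidableEq V] {W : WeightedGraph V}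

private lemma adjM_of_adj {a b : V} (h : W.G.Adj a b) : W.adjMatrix a b = W.w a b := if_pos h

private lemma adjM_of_not {a b : V} (h : ¬ W.G.Adj a b) : W.adjMatrix a b = 0 := if_neg h

private lemma adjM_pos {a b : V} (h : W.G.Adj a b) : 0 < W.adjMatrix a b := by
  rw [adjM_of_adj h]; exact W.pos a b h

private lemma adjM_symm (a b : V) : W.adjMatrix a b = W.adjMatrix b a := by
  by_cases h : W.G.Adj a b
  · rw [adjM_of_adj h, adjM_of_adj h.symm, W.symm]
  · rw [adjM_of_not h, adjM_of_not (fun hh => h hh.symm)]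

private lemma no_P4 (hr : W.adjMatrix.rank ≤ 3) {a b c d : V}
    (hab : W.G.Adj a b) (hbc : W.G.Adj b c) (hcd : W.G.Adj c d)
    (hac : ¬ W.G.Adj a c) (had : ¬ W.G.Adj a d) (hbd : ¬ W.G.Adj b d) : False := by
  have h2 : a ≠ c := by rintro rfl; exact had hcd
  have h3 : a ≠ d := by rintro rfl; exact hbd hab.symm
  have h5 : b ≠ d := by rintro rfl; exact had hab
  have hM : W.adjMatrix.submatrix ![a,b,c,d] ![a,b,c,d] =
      !![0, W.w a b, 0, 0; W.w a b, 0, W.w b c, 0; 0, W.w b c, 0, W.w c d; 0, 0, W.w c d, 0] := by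
    ext i j
    fin_cases i <;> fin_cases j <;>
      simp [adjM_of_adj, adjM_of_not, hab, hbc, hcd, hac, had, hbd,
        adjM_of_adj hab.symm, adjM_of_adj hbc.symm, adjM_of_adj hcd.symm,
        adjM_of_not (fun h => hac h.symm), adjM_of_not (fun h => had h.symm),
        adjM_of_not (fun h => hbd h.symm), adjM_of_not (W.G.irrefl (v := a)),
        adjM_of_not (W.G.irrefl (v := b)), adjM_of_not (W.G.irrefl (v := c)),
        adjM_of_not (W.G.irrefl (v := d)), W.symm, Matrix.vecHead, Matrix.vecTail]
  have hdet : (W.adjMatrix.submatrix ![a,b,c,d] ![a,b,c,d]).det ≠ 0 := by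
    rw [hM, detP4]
    have := W.pos a b hab
    have := W.pos c d hcd
    positivity
  have := le_rank_of_det_ne W.adjMatrix ![a,b,c,d] hdet
  omega

private lemma no_paw (hr : W.adjMatrix.rank ≤ 3) {a b c d : V}
    (hab : W.G.Adj a b) (hac : W.G.Adj a c) (hbc : W.G.Adj b c) (hcd : W.G.Adj c d)
    (had : ¬ W.G.Adj a d) (hbd : ¬ W.G.Adj b d) : False := by
  have h3 : a ≠ d := by rintro rfl; exact hbd hab.symm
  have h5 : b ≠ d := by rintro rfl; exact had hab
  have hM : W.adjMatrix.submatrix ![a,b,c,d] ![a,b,c,d] =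
      !![0, W.w a b, W.w a c, 0; W.w a b, 0, W.w b c, 0;
         W.w a c, W.w b c, 0, W.w c d; 0, 0, W.w c d, 0] := by
    ext i j
    fin_cases i <;> fin_cases j <;>
      simp [adjM_of_adj, adjM_of_not, hab, hac, hbc, hcd, had, hbd,
        adjM_of_adj hab.symm, adjM_of_adj hac.symm, adjM_of_adj hbc.symm, adjM_of_adj hcd.symm,
        adjM_of_not (fun h => had h.symm), adjM_of_not (fun h => hbd h.symm),
        adjM_of_not (W.G.irrefl (v := a)), adjM_of_not (W.G.irrefl (v := b)),
        adjM_of_not (W.G.irrefl (v := c)), adjM_of_not (W.G.irrefl (v := d)),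
        W.symm, Matrix.vecHead, Matrix.vecTail]
  have hdet : (W.adjMatrix.submatrix ![a,b,c,d] ![a,b,c,d]).det ≠ 0 := by
    rw [hM, detPaw]
    have := W.pos a b hab
    have := W.pos c d hcd
    positivity
  have := le_rank_of_det_ne W.adjMatrix ![a,b,c,d] hdet
  omega

/-- If the graph looks "bipartite-ish with part `{b, c}`", the rank cannot be 3. -/
private lemma bip_rank_ne_three (hr : W.adjMatrix.rank = 3) {a b c : V} (hbc : b ≠ c)
    (hnadj : ¬ W.G.Adj b c) (hab : W.G.Adj a b) (hac : W.G.Adj a c)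
    (hind : ∀ v w : V, v ≠ b → v ≠ c → w ≠ b → w ≠ c → ¬ W.G.Adj v w) : False := by
  set A := W.adjMatrix with hA
  have hsymm : ∀ p q : V, A p q = A q p := adjM_symm
  have hzero : ∀ p q : V, ¬ W.G.Adj p q → A p q = 0 := fun _ _ h => adjM_of_not h
  have hanb : a ≠ b := hab.ne
  have hanc : a ≠ c := hac.ne
  have hAbb : A b b = 0 := hzero _ _ (W.G.irrefl)
  have hAcc : A c c = 0 := hzero _ _ (W.G.irrefl)
  have hAbc : A b c = 0 := hzero _ _ hnadj
  have hAcb : A c b = 0 := hzero _ _ (fun h => hnadj h.symm)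
  by_cases hex : ∃ v : V, A v c * A a b ≠ A a c * A v b
  · obtain ⟨v, hv⟩ := hex
    have hva : v ≠ a := by rintro rfl; exact hv rfl
    have hvb : v ≠ b := by rintro rfl; rw [hAbc, hAbb, zero_mul, mul_zero] at hv; exact hv rfl
    have hvc : v ≠ c := by rintro rfl; rw [hAcc, hAcb, zero_mul, mul_zero] at hv; exact hv rfl
    have hnav : ¬ W.G.Adj a v := hind a v hanb hanc hvb hvc
    have hnva : ¬ W.G.Adj v a := fun h => hnav h.symm
    have hM : A.submatrix ![a,v,b,c] ![a,v,b,c] =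
        !![0, 0, A a b, A a c; 0, 0, A v b, A v c;
           A a b, A v b, 0, 0; A a c, A v c, 0, 0] := by
      ext i j
      fin_cases i <;> fin_cases j <;>
        simp [hzero _ _ (W.G.irrefl (v := a)), hzero _ _ (W.G.irrefl (v := v)),
          hzero _ _ hnav, hzero _ _ hnva, hAbb, hAcc, hAbc, hAcb,
          hsymm b a, hsymm b v, hsymm c a, hsymm c v,
          Matrix.vecHead, Matrix.vecTail]
    have hdet : (A.submatrix ![a,v,b,c] ![a,v,b,c]).det ≠ 0 := by
      rw [hM, detC4]
      have : A a b * A v c - A a c * A v b ≠ 0 := by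
        intro h
        exact hv (by rw [mul_comm]; linarith)
      positivity
    have := le_rank_of_det_ne A ![a,v,b,c] hdet
    omega
  · push_neg at hex
    have hab0 : A a b ≠ 0 := ne_of_gt (adjM_pos hab)
    have hdecomp : A = Matrix.vecMulVec (fun v => A v b)
          (fun v => (if v = b then (1:ℝ) else 0) + A a c / A a b * (if v = c then 1 else 0))
        + Matrix.vecMulVec
          (fun v => (if v = b then (1:ℝ) else 0) + A a c / A a b * (if v = c then 1 else 0))
          (fun v => A v b) := by
      ext i j
      simp only [Matrix.add_apply, Matrix.vecMulVec_apply]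
      by_cases hjb : j = b
      · rw [hjb]
        simp [hbc, hAbb]
      · by_cases hjc : j = c
        · rw [hjc]
          simp [(Ne.symm hbc), hAcb, hjb]
          field_simp
          linear_combination hex i
        · by_cases hib : i = b
          · rw [hib]
            simp [hjb, hjc, hAbb, hbc, hsymm b j]
          · by_cases hic : i = c
            · rw [hic]
              simp [hjb, hjc, hAcb, (Ne.symm hbc)]
              field_simp
              linear_combination hex j + A a b * hsymm c j
            · simp [hib, hic, hjb, hjc, hzero _ _ (hind i j hib hic hjb hjc)]
    have hle : A.rank ≤ 2 := by
      rw [hdecomp]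
      have h0 := myrank_add_le (Matrix.vecMulVec (fun v => A v b)
          (fun v => (if v = b then (1:ℝ) else 0) + A a c / A a b * (if v = c then 1 else 0)))
        (Matrix.vecMulVec
          (fun v => (if v = b then (1:ℝ) else 0) + A a c / A a b * (if v = c then 1 else 0))
          (fun v => A v b))
      have h1 := myrank_vecMulVec_le (fun v => A v b)
          (fun v => (if v = b then (1:ℝ) else 0) + A a c / A a b * (if v = c then 1 else 0))
      have h2 := myrank_vecMulVec_le
          (fun v => (if v = b then (1:ℝ) else 0) + A a c / A a b * (if v = c then 1 else 0))
          (fun v => A v b)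
      omega
    omega

end WGUtil


section Main

variable {V : Type*} [Fintype V] [DecidableEq V] {W : WeightedGraph V}

private lemma stmt12_backward {u v x1 x2 : V} (hT : Theta101Shape W u v x1 x2)
    (hw : W.w u x1 * W.w x2 v = W.w u x2 * W.w x1 v) : W.adjMatrix.rank = 3 := by
  obtain ⟨hnd, hcov, hspec⟩ := hT
  have hcov' : ∀ z : V, z = u ∨ z = v ∨ z = x1 ∨ z = x2 := by
    intro z; simpa using hcov z
  have hnd' : u ≠ v ∧ u ≠ x1 ∧ u ≠ x2 ∧ v ≠ x1 ∧ v ≠ x2 ∧ x1 ≠ x2 := by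
    simp only [List.nodup_cons, List.mem_cons, List.not_mem_nil, or_false,
      List.mem_singleton, not_or, List.nodup_nil, and_true] at hnd
    tauto
  obtain ⟨huv, hux1, hux2, hvx1, hvx2, hx12⟩ := hnd'
  have hauv : W.G.Adj u v := (hspec u v).mpr (by simp)
  have haux1 : W.G.Adj u x1 := (hspec u x1).mpr (by simp)
  have hax1v : W.G.Adj x1 v := (hspec x1 v).mpr (by simp)
  have haux2 : W.G.Adj u x2 := (hspec u x2).mpr (by simp)
  have hax2v : W.G.Adj x2 v := (hspec x2 v).mpr (by simp)
  have hnx12 : ¬ W.G.Adj x1 x2 := by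
    intro h
    have := (hspec x1 x2).mp h
    simp [Ne.symm hux1, Ne.symm hux2, Ne.symm hvx1, Ne.symm hvx2, hx12, Ne.symm hx12] at this
  have hinj : Function.Injective ![u, v, x1, x2] := inj4 huv hux1 hux2 hvx1 hvx2 hx12
  have hsurj : Function.Surjective ![u, v, x1, x2] := by
    intro z; rcases hcov' z with rfl | rfl | rfl | rfl
    exacts [⟨0, rfl⟩, ⟨1, rfl⟩, ⟨2, rfl⟩, ⟨3, rfl⟩]
  let e : Fin 4 ≃ V := Equiv.ofBijective _ ⟨hinj, hsurj⟩
  have hcard : Fintype.card V = 4 := by simpa using (Fintype.card_congr e).symm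
  have hM : W.adjMatrix.submatrix ![u,v,x1,x2] ![u,v,x1,x2] =
      !![0, W.w u v, W.w u x1, W.w u x2;
         W.w u v, 0, W.w v x1, W.w v x2;
         W.w u x1, W.w v x1, 0, 0;
         W.w u x2, W.w v x2, 0, 0] := by
    ext i j
    fin_cases i <;> fin_cases j <;>
      simp [adjM_of_adj, adjM_of_not, hauv, haux1, hax1v, haux2, hax2v, hnx12,
        adjM_of_adj hauv.symm, adjM_of_adj haux1.symm, adjM_of_adj hax1v.symm,
        adjM_of_adj haux2.symm, adjM_of_adj hax2v.symm,
        adjM_of_not (fun h => hnx12 h.symm),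
        adjM_of_not (W.G.irrefl (v := u)), adjM_of_not (W.G.irrefl (v := v)),
        adjM_of_not (W.G.irrefl (v := x1)), adjM_of_not (W.G.irrefl (v := x2)),
        W.symm, Matrix.vecHead, Matrix.vecTail]
  have hdetA : W.adjMatrix.det = 0 := by
    have h1 : (W.adjMatrix.submatrix e e).det = W.adjMatrix.det :=
      Matrix.det_submatrix_equiv_self e _
    have h2 : (W.adjMatrix.submatrix e e)
        = (W.adjMatrix.submatrix ![u,v,x1,x2] ![u,v,x1,x2]) := rfl
    rw [← h1, h2, hM, detDiamond]
    have h3 : W.w u x1 * W.w v x2 - W.w v x1 * W.w u x2 = 0 := by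
      rw [W.symm v x2, W.symm v x1]
      linarith [hw]
    rw [h3]
    norm_num
  have hup : W.adjMatrix.rank < 4 := hcard ▸ rank_lt_card_of_det_eq_zero _ hdetA
  have hM3 : W.adjMatrix.submatrix ![u,v,x1] ![u,v,x1] =
      !![0, W.w u v, W.w u x1; W.w u v, 0, W.w v x1; W.w u x1, W.w v x1, 0] := by
    ext i j
    fin_cases i <;> fin_cases j <;>
      simp [adjM_of_adj, hauv, haux1, hax1v, adjM_of_adj hauv.symm, adjM_of_adj haux1.symm,
        adjM_of_adj hax1v.symm, adjM_of_not (W.G.irrefl (v := u)),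
        adjM_of_not (W.G.irrefl (v := v)), adjM_of_not (W.G.irrefl (v := x1)),
        W.symm, Matrix.vecHead, Matrix.vecTail]
  have hdet3 : (W.adjMatrix.submatrix ![u,v,x1] ![u,v,x1]).det ≠ 0 := by
    rw [hM3, detTriangle]
    have h1 := W.pos u v hauv
    have h2 := W.pos u x1 haux1
    have h4 := W.pos v x1 hax1v.symm
    positivity
  have hlow := le_rank_of_det_ne W.adjMatrix ![u,v,x1] hdet3
  omega

private lemma stmt12_forward (hbic : W.IsBicyclic) (hrank : W.adjMatrix.rank = 3) :
    ∃ u v x1 x2 : V, Theta101Shape W u v x1 x2 ∧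
      W.w u x1 * W.w x2 v = W.w u x2 * W.w x1 v := by
  classical
  obtain ⟨hconn, hcard⟩ := hbic
  have hr3 : W.adjMatrix.rank ≤ 3 := hrank.le
  have hedge : W.G.edgeFinset.card = Fintype.card V + 1 := by
    rw [← hcard, ← SimpleGraph.coe_edgeFinset, Set.ncard_coe_finset]
  have hsum : ∑ w : V, W.G.degree w = 2 * (Fintype.card V + 1) := by
    rw [SimpleGraph.sum_degrees_eq_twice_card_edges, hedge]
  have hn4 : 4 ≤ Fintype.card V := by
    have hle := W.G.card_edgeFinset_le_card_choose_two
    rw [hedge] at hle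
    by_contra hlt
    push_neg at hlt
    obtain ⟨n, hn⟩ : ∃ n, Fintype.card V = n := ⟨_, rfl⟩
    rw [hn] at hle hlt
    interval_cases n <;> revert hle <;> decide
  have hdeg1 : ∀ x : V, 0 < W.G.degree x := by
    intro x
    rw [SimpleGraph.degree_pos_iff_exists_adj]
    have h1 : (1 : ℕ) < Fintype.card V := by omega
    obtain ⟨z, hz⟩ := Fintype.exists_ne_of_one_lt_card h1 x
    obtain ⟨p⟩ := hconn.preconnected x z
    cases p with
    | nil => exact absurd rfl hz
    | cons h q => exact ⟨_, h⟩
  have hdeg2 : ∀ x : V, 2 ≤ W.G.degree x := by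
    intro x
    by_contra hlt
    push_neg at hlt
    have h1 : W.G.degree x = 1 := by have := hdeg1 x; omega
    obtain ⟨y, hy⟩ := Finset.card_eq_one.mp h1
    have hxy : W.G.Adj x y := by
      rw [← SimpleGraph.mem_neighborFinset, hy]; exact Finset.mem_singleton_self y
    have hxnb : ∀ z, W.G.Adj x z → z = y := by
      intro z hz
      have h2 : z ∈ W.G.neighborFinset x := (SimpleGraph.mem_neighborFinset _ _ _).mpr hz
      rw [hy] at h2; exact Finset.mem_singleton.mp h2
    by_cases hA : ∃ z, W.G.Adj y z ∧ z ≠ x ∧ ∃ w', W.G.Adj z w' ∧ w' ≠ y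
    · obtain ⟨z, hyz, hzx, w', hzw, hwy⟩ := hA
      have hxz : ¬ W.G.Adj x z := fun h => hyz.ne' (hxnb z h)
      have hxw : ¬ W.G.Adj x w' := fun h => hwy (hxnb w' h)
      by_cases hyw : W.G.Adj y w'
      · exact no_paw hr3 hzw hyz.symm hyw.symm hxy.symm
          (fun h => hxz h.symm) (fun h => hxw h.symm)
      · exact no_P4 hr3 hxy hyz hzw hxz hxw hyw
    · push_neg at hA
      have hclosed : ∀ s t : V, (s = y ∨ W.G.Adj y s) → W.G.Adj s t → (t = y ∨ W.G.Adj y t) := by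
        intro s t hs hst
        rcases hs with rfl | hys
        · exact Or.inr hst
        · by_cases hsx : s = x
          · subst hsx; exact Or.inl (hxnb t hst)
          · exact Or.inl (hA s hys hsx t hst)
      have huniv : ∀ z : V, z = y ∨ W.G.Adj y z :=
        reach_all hconn hclosed (Or.inl rfl)
      have hdegle : ∀ z : V, z ≠ y → W.G.degree z ≤ 1 := by
        intro z hzy
        have hsub : W.G.neighborFinset z ⊆ {y} := by
          intro w' hw'
          rw [SimpleGraph.mem_neighborFinset] at hw'
          rw [Finset.mem_singleton]
          by_cases hzx : z = x
          · subst hzx; exact hxnb w' hw'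
          · rcases huniv z with rfl | hyz
            · exact absurd rfl hzy
            · exact hA z hyz hzx w' hw'
        calc W.G.degree z = (W.G.neighborFinset z).card := rfl
          _ ≤ 1 := by simpa using Finset.card_le_card hsub
      have hdy : W.G.degree y < Fintype.card V := W.G.degree_lt_card_verts y
      have hsplit : W.G.degree y + ∑ z ∈ Finset.univ.erase y, W.G.degree z
        = ∑ z : V, W.G.degree z :=
      Finset.add_sum_erase Finset.univ (fun z => W.G.degree z) (Finset.mem_univ y)
      have hbound : ∑ z ∈ Finset.univ.erase y, W.G.degree z ≤ (Finset.univ.erase y).card * 1 := by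
        have := Finset.sum_le_card_nsmul (Finset.univ.erase y) (fun z => W.G.degree z) 1
          (fun z hz => hdegle z (Finset.ne_of_mem_erase hz))
        simpa using this
      have hce : (Finset.univ.erase y).card = Fintype.card V - 1 := by
        rw [Finset.card_erase_of_mem (Finset.mem_univ y), Finset.card_univ]
      omega
  have hex2 : ∃ a : V, W.G.degree a = 2 := by
    by_contra h
    push_neg at h
    have h3 : ∀ z : V, 3 ≤ W.G.degree z := by
      intro z; have h1 := hdeg2 z; have h2 := h z; omega
    have hbig : 3 * Fintype.card V ≤ ∑ z : V, W.G.degree z := by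
      have := Finset.card_nsmul_le_sum Finset.univ (fun z => W.G.degree z) 3
        (fun z _ => h3 z)
      simpa [Finset.card_univ, mul_comm] using this
    omega
  obtain ⟨a, ha2⟩ := hex2
  obtain ⟨b, c, hbcne, hNa⟩ := Finset.card_eq_two.mp ha2
  have hab : W.G.Adj a b := by
    rw [← SimpleGraph.mem_neighborFinset, hNa]; simp
  have hac : W.G.Adj a c := by
    rw [← SimpleGraph.mem_neighborFinset, hNa]; simp
  have haN : ∀ z, W.G.Adj a z → z = b ∨ z = c := by
    intro z hz
    have h2 : z ∈ W.G.neighborFinset a := (SimpleGraph.mem_neighborFinset _ _ _).mpr hz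
    rw [hNa] at h2; simpa using h2
  have hanb : a ≠ b := hab.ne
  have hanc : a ≠ c := hac.ne
  have hD : ∀ t : V, t ≠ a → t ≠ b → t ≠ c → W.G.Adj b t ∨ W.G.Adj c t := by
    intro t hta htb htc
    by_contra hcon
    push_neg at hcon
    obtain ⟨hbt, hct⟩ := hcon
    have hPa : (a = a ∨ a = b ∨ a = c ∨ W.G.Adj b a ∨ W.G.Adj c a) := Or.inl rfl
    have hPt : ¬ (t = a ∨ t = b ∨ t = c ∨ W.G.Adj b t ∨ W.G.Adj c t) := by
      push_neg; exact ⟨hta, htb, htc, hbt, hct⟩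
    obtain ⟨p⟩ := hconn.preconnected a t
    obtain ⟨s, t', hst, hs, ht'⟩ := walk_crossing
      (P := fun z => z = a ∨ z = b ∨ z = c ∨ W.G.Adj b z ∨ W.G.Adj c z) p hPa hPt
    push_neg at ht'
    obtain ⟨ht'a, ht'b, ht'c, hbt', hct'⟩ := ht'
    rcases hs with rfl | rfl | rfl | hbs | hcs
    · rcases haN t' hst with rfl | rfl
      · exact ht'b rfl
      · exact ht'c rfl
    · exact hbt' hst
    · exact hct' hst
    · by_cases hsb : s = b
      · subst hsb; exact hbt' hst
      · by_cases hsc : s = c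
        · subst hsc; exact hct' hst
        · refine no_P4 hr3 hst.symm hbs.symm hab.symm (fun h => hbt' h.symm) ?_ ?_
          · intro h
            rcases haN t' h.symm with rfl | rfl
            · exact ht'b rfl
            · exact ht'c rfl
          · intro h
            rcases haN s h.symm with rfl | rfl
            · exact hsb rfl
            · exact hsc rfl
    · by_cases hsb : s = b
      · subst hsb; exact hbt' hst
      · by_cases hsc : s = c
        · subst hsc; exact hct' hst
        · refine no_P4 hr3 hst.symm hcs.symm hac.symm (fun h => hct' h.symm) ?_ ?_
          · intro h
            rcases haN t' h.symm with rfl | rfl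
            · exact ht'b rfl
            · exact ht'c rfl
          · intro h
            rcases haN s h.symm with rfl | rfl
            · exact hsb rfl
            · exact hsc rfl
  by_cases hbc : W.G.Adj b c
  · -- b ~ c
    have hDboth : ∀ t : V, t ≠ a → t ≠ b → t ≠ c → W.G.Adj b t ∧ W.G.Adj c t := by
      intro t hta htb htc
      have hnat : ¬ W.G.Adj a t := by
        intro hat
        rcases haN t hat with rfl | rfl
        · exact htb rfl
        · exact htc rfl
      rcases hD t hta htb htc with h | h
      · refine ⟨h, ?_⟩
        by_contra hct
        exact no_paw hr3 hac hab hbc.symm h hnat hct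
      · refine ⟨?_, h⟩
        by_contra hbt
        exact no_paw hr3 hab hac hbc h hnat hbt
    rcases Nat.eq_or_lt_of_le hn4 with h4 | h5
    · -- exactly 4 vertices: the diamond
      have hset3 : ({a, b, c} : Finset V).card = 3 := by
        rw [Finset.card_insert_of_notMem (by simp [hanb, hanc]),
          Finset.card_insert_of_notMem (by simp [hbcne]), Finset.card_singleton]
      have hsd : (Finset.univ \ {a, b, c} : Finset V).card = 1 := by
        rw [Finset.card_sdiff_of_subset (Finset.subset_univ _), Finset.card_univ, hset3, ← h4]
      obtain ⟨d, hd⟩ := Finset.card_eq_one.mp hsd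
      have hdmem : d ∈ Finset.univ \ ({a, b, c} : Finset V) := by
        rw [hd]; exact Finset.mem_singleton_self d
      have hdf : ¬ (d = a ∨ d = b ∨ d = c) := by
        have h2 := Finset.mem_sdiff.mp hdmem
        simpa using h2.2
      push_neg at hdf
      obtain ⟨hda, hdb, hdc⟩ := hdf
      have hcover : ∀ z : V, z = b ∨ z = c ∨ z = a ∨ z = d := by
        intro z
        by_cases h1 : z = b
        · exact Or.inl h1
        by_cases h2 : z = c
        · exact Or.inr (Or.inl h2)
        by_cases h3 : z = a
        · exact Or.inr (Or.inr (Or.inl h3))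
        have h5 : z ∈ Finset.univ \ ({a,b,c} : Finset V) := by simp [h1, h2, h3]
        rw [hd] at h5
        exact Or.inr (Or.inr (Or.inr (Finset.mem_singleton.mp h5)))
      obtain ⟨hbd, hcd⟩ := hDboth d hda hdb hdc
      have hnad : ¬ W.G.Adj a d := by
        intro h
        rcases haN d h with rfl | rfl
        · exact hdb rfl
        · exact hdc rfl
      have hnda : ¬ W.G.Adj d a := fun h => hnad h.symm
      refine ⟨b, c, a, d, ⟨?_, ?_, ?_⟩, ?_⟩
      · simp [hbcne, Ne.symm hanb, Ne.symm hanc, Ne.symm hdb, Ne.symm hdc, Ne.symm hda, hanb, hanc, hda, hdb, hdc]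
      · intro z; simpa using hcover z
      · intro z w'
        rcases hcover z with rfl | rfl | rfl | rfl <;> rcases hcover w' with rfl | rfl | rfl | rfl <;>
          simp [hbc, hab, hac, hbd, hcd, hbc.symm, hab.symm, hac.symm, hbd.symm, hcd.symm,
            hnad, hnda, SimpleGraph.irrefl, hbcne, Ne.symm hbcne, hanb, Ne.symm hanb,
            hanc, Ne.symm hanc, hda, Ne.symm hda, hdb, Ne.symm hdb, hdc, Ne.symm hdc,
            Prod.mk.injEq]
      · have hinj : Function.Injective ![b, c, a, d] :=
          inj4 hbcne (Ne.symm hanb) (Ne.symm hdb) (Ne.symm hanc) (Ne.symm hdc) (Ne.symm hda)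
        have hsurj : Function.Surjective ![b, c, a, d] := by
          intro z
          rcases hcover z with rfl | rfl | rfl | rfl
          exacts [⟨0, rfl⟩, ⟨1, rfl⟩, ⟨2, rfl⟩, ⟨3, rfl⟩]
        let e : Fin 4 ≃ V := Equiv.ofBijective _ ⟨hinj, hsurj⟩
        have hdetA : W.adjMatrix.det = 0 := by
          by_contra hne
          have h2 := Matrix.rank_of_isUnit W.adjMatrix
            ((Matrix.isUnit_iff_isUnit_det _).mpr (isUnit_iff_ne_zero.mpr hne))
          rw [hrank] at h2
          omega
        have hM : W.adjMatrix.submatrix ![b,c,a,d] ![b,c,a,d] =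
            !![0, W.w b c, W.w b a, W.w b d;
               W.w b c, 0, W.w c a, W.w c d;
               W.w b a, W.w c a, 0, 0;
               W.w b d, W.w c d, 0, 0] := by
          ext i j
          fin_cases i <;> fin_cases j <;>
            simp [adjM_of_adj, adjM_of_not, hbc, hab, hac, hbd, hcd,
              adjM_of_adj hbc.symm, adjM_of_adj hab.symm, adjM_of_adj hac.symm,
              adjM_of_adj hbd.symm, adjM_of_adj hcd.symm, adjM_of_not hnad, adjM_of_not hnda,
              adjM_of_not (W.G.irrefl (v := a)), adjM_of_not (W.G.irrefl (v := b)),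
              adjM_of_not (W.G.irrefl (v := c)), adjM_of_not (W.G.irrefl (v := d)),
              W.symm, Matrix.vecHead, Matrix.vecTail]
        have h0 : (W.adjMatrix.submatrix ![b,c,a,d] ![b,c,a,d]).det = 0 := by
          have h1 : (W.adjMatrix.submatrix e e).det = W.adjMatrix.det :=
            Matrix.det_submatrix_equiv_self e _
          have h2 : W.adjMatrix.submatrix e e
              = W.adjMatrix.submatrix ![b,c,a,d] ![b,c,a,d] := rfl
          rw [← h2, h1, hdetA]
        rw [hM, detDiamond] at h0
        have h3 : W.w b a * W.w c d - W.w c a * W.w b d = 0 :=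
          pow_eq_zero_iff (by norm_num) |>.mp h0
        rw [W.symm d c, W.symm a c]
        linarith
    · -- at least 5 vertices: contradiction
      exfalso
      have hnb : Finset.univ.erase b ⊆ W.G.neighborFinset b := by
        intro z hz
        have hzb : z ≠ b := Finset.ne_of_mem_erase hz
        rw [SimpleGraph.mem_neighborFinset]
        by_cases h1 : z = a
        · subst h1; exact hab.symm
        by_cases h2 : z = c
        · subst h2; exact hbc
        exact (hDboth z h1 hzb h2).1
      have hnc : Finset.univ.erase c ⊆ W.G.neighborFinset c := by
        intro z hz
        have hzc : z ≠ c := Finset.ne_of_mem_erase hz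
        rw [SimpleGraph.mem_neighborFinset]
        by_cases h1 : z = a
        · subst h1; exact hac.symm
        by_cases h2 : z = b
        · subst h2; exact hbc.symm
        exact (hDboth z h1 h2 hzc).2
      have hdb : Fintype.card V - 1 ≤ W.G.degree b := by
        have h2 := Finset.card_le_card hnb
        rwa [Finset.card_erase_of_mem (Finset.mem_univ b), Finset.card_univ] at h2
      have hdc : Fintype.card V - 1 ≤ W.G.degree c := by
        have h2 := Finset.card_le_card hnc
        rwa [Finset.card_erase_of_mem (Finset.mem_univ c), Finset.card_univ] at h2
      have e1 : W.G.degree b + ∑ z ∈ Finset.univ.erase b, W.G.degree z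
          = ∑ z : V, W.G.degree z :=
        Finset.add_sum_erase Finset.univ (fun z => W.G.degree z) (Finset.mem_univ b)
      have hcmem : c ∈ Finset.univ.erase b :=
        Finset.mem_erase.mpr ⟨Ne.symm hbcne, Finset.mem_univ c⟩
      have e2 : W.G.degree c + ∑ z ∈ (Finset.univ.erase b).erase c, W.G.degree z
          = ∑ z ∈ Finset.univ.erase b, W.G.degree z :=
        Finset.add_sum_erase (Finset.univ.erase b) (fun z => W.G.degree z) hcmem
      have e3 : ((Finset.univ.erase b).erase c).card * 2
          ≤ ∑ z ∈ (Finset.univ.erase b).erase c, W.G.degree z := by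
        have := Finset.card_nsmul_le_sum ((Finset.univ.erase b).erase c)
          (fun z => W.G.degree z) 2 (fun z _ => hdeg2 z)
        simpa using this
      have e4 : ((Finset.univ.erase b).erase c).card = Fintype.card V - 2 := by
        rw [Finset.card_erase_of_mem hcmem, Finset.card_erase_of_mem (Finset.mem_univ b),
          Finset.card_univ]
        omega
      omega
  · -- b not adjacent to c : contradiction via the bipartite-ish lemma
    exfalso
    have hDboth : ∀ t : V, t ≠ a → t ≠ b → t ≠ c → W.G.Adj b t ∧ W.G.Adj c t := by
      intro t hta htb htc
      have hnat : ¬ W.G.Adj a t := by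
        intro hat
        rcases haN t hat with rfl | rfl
        · exact htb rfl
        · exact htc rfl
      rcases hD t hta htb htc with h | h
      · refine ⟨h, ?_⟩
        by_contra hct
        exact no_P4 hr3 hac.symm hab h (fun hh => hbc hh.symm) hct hnat
      · refine ⟨?_, h⟩
        by_contra hbt
        exact no_P4 hr3 hab.symm hac h hbc hbt hnat
    have hind : ∀ z w' : V, z ≠ b → z ≠ c → w' ≠ b → w' ≠ c → ¬ W.G.Adj z w' := by
      intro z w' hzb hzc hwb hwc hzw
      by_cases hza : z = a
      · subst hza
        rcases haN w' hzw with rfl | rfl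
        · exact hwb rfl
        · exact hwc rfl
      by_cases hwa : w' = a
      · subst hwa
        rcases haN z hzw.symm with rfl | rfl
        · exact hzb rfl
        · exact hzc rfl
      have h1 := (hDboth z hza hzb hzc).1
      have h2 := (hDboth w' hwa hwb hwc).1
      refine no_paw hr3 hzw h1.symm h2.symm hab.symm ?_ ?_
      · intro h
        rcases haN z h.symm with rfl | rfl
        · exact hzb rfl
        · exact hzc rfl
      · intro h
        rcases haN w' h.symm with rfl | rfl
        · exact hwb rfl
        · exact hwc rfl
    exact bip_rank_ne_three hrank hbcne hbc hab hac hind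

end Main

end Stmt12Aux

/-- the weighted bicyclic graphs of rank `3`. -/
theorem stmt12 {V : Type*} [Fintype V] [DecidableEq V] (W : WeightedGraph V)
    (hbic : W.IsBicyclic) :
    W.adjMatrix.rank = 3 ↔
      (∃ u v x1 x2 : V, Theta101Shape W u v x1 x2 ∧
        W.w u x1 * W.w x2 v = W.w u x2 * W.w x1 v) := by
  constructor
  · exact fun h => stmt12_forward hbic h
  · rintro ⟨u, v, x1, x2, hT, hw⟩
    exact stmt12_backward hT hw
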